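/- Let π = (p_1,...,p_n) be a sequence of distinct keys avoiding the pattern (2,3,1) (i.e., there are no indices i < j < k with p_k < p_i < p_j). Then for every i with 2 ≤ i ≤ n, the key p_i is the smallest sub-root at time i: p_i is the smallest key not in {p_1,...,p_{i−1}} whose parent in BST(π) has its key in {p_1,...,p_{i−1}}. -/

import Mathlib

/-- Binary trees with keys at internal nodes. -/
inductive BT (α : Type) where
  | leaf : BT α
  | node : BT α → α → BT α → BT α
deriving DecidableEq

namespace BT

variable {α : Type} [LinearOrder α]

/-- The list of keys of a tree, in symmetric (inorder) order. -/
def keys : BT α → List α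
  | leaf => []
  | node l v r => keys l ++ v :: keys r

/-- The number of nodes of a tree. -/
def size : BT α → ℕ
  | leaf => 0
  | node l _ r => size l + size r + 1

/-- The symmetric-order (binary search tree) property. -/
def IsBST : BT α → Prop
  | leaf => True
  | node l v r => (∀ x ∈ l.keys, x < v) ∧ (∀ x ∈ r.keys, v < x) ∧ l.IsBST ∧ r.IsBST

/-- Preorder of a binary tree: root, then left subtree, then right subtree. -/
def preorder : BT α → List α
  | leaf => []
  | node l v r => v :: (preorder l ++ preorder r)

/-- Postorder of a binary tree: left subtree, right subtree, then root. -/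
def postorder : BT α → List α
  | leaf => []
  | node l v r => postorder l ++ postorder r ++ [v]

/-- Reversed preorder: root, then right subtree, then left subtree
(the preorder of the mirror image). -/
def revPreorder : BT α → List α
  | leaf => []
  | node l v r => v :: (revPreorder r ++ revPreorder l)

/-- Standard leaf insertion into a binary search tree. -/
def insertKey : BT α → α → BT α
  | leaf, x => node leaf x leaf
  | node l v r, x =>
    if x < v then node (insertKey l x) v r
    else if v < x then node l v (insertKey r x)
    else node l v r

/-- The depth (number of edges from the root) of the node with key `x`,
located by binary search. -/
def depthOf : BT α → α → ℕ
  | leaf, _ => 0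
  | node l v r, x =>
    if x < v then depthOf l x + 1
    else if v < x then depthOf r x + 1
    else 0

/-- The search path to the key `x`: `false` records a step to a left child,
`true` a step to a right child. -/
def pathTo : BT α → α → List Bool
  | leaf, _ => []
  | node l v r, x =>
    if x < v then false :: pathTo l x
    else if v < x then true :: pathTo r x
    else []

/-- The left-depth of the node with key `x`: the number of left-child edges
on the path from the root to it. -/
def leftDepthKey : BT α → α → ℕ
  | leaf, _ => 0
  | node l v r, x =>
    if x < v then leftDepthKey l x + 1
    else if v < x then leftDepthKey r x
    else 0

/-- The subtree rooted at the node with key `x` (empty if `x` is absent). -/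
def subtreeAt : BT α → α → BT α
  | leaf, _ => leaf
  | node l v r, x =>
    if x < v then subtreeAt l x
    else if v < x then subtreeAt r x
    else node l v r

/-- The key at the root, if any. -/
def rootKey : BT α → Option α
  | leaf => none
  | node _ v _ => some v

/-- The key of the parent of the node with key `x`, if any. -/
def parentKey : BT α → α → Option α
  | leaf, _ => none
  | node l v r, x =>
    if x < v then (if l.rootKey = some x then some v else l.parentKey x)
    else if v < x then (if r.rootKey = some x then some v else r.parentKey x)
    else none

/-- A step of the context (zipper) describing the search path from the root
to the current subtree: `inL v r` means the current subtree is the left child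
of a node with key `v` and right subtree `r`; `inR l v` means it is the right
child of a node with key `v` and left subtree `l`. -/
inductive Ctx (α : Type) where
  | inL : α → BT α → Ctx α
  | inR : BT α → α → Ctx α

/-- Descend along the search path for `x`, recording the context.
The head of the returned list corresponds to the immediate parent. -/
def descend : BT α → α → List (Ctx α) → List (Ctx α) × BT α
  | leaf, _, acc => (acc, leaf)
  | node l v r, x, acc =>
    if x < v then descend l x (Ctx.inL v r :: acc)
    else if v < x then descend r x (Ctx.inR l v :: acc)
    else (acc, node l v r)

/-- Reattach a subtree into its context, with no rotations. -/
def rebuild : BT α → List (Ctx α) → BT α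
  | t, [] => t
  | t, Ctx.inL v r :: cs => rebuild (node t v r) cs
  | t, Ctx.inR l v :: cs => rebuild (node l v t) cs

/-- Bottom-up splay steps: repeatedly apply zig / zig-zig / zig-zag steps to
the current subtree (rooted at the node being splayed) until the context is
exhausted. -/
def splayLoop : BT α → List (Ctx α) → BT α
  | t, [] => t
  | node a x b, [Ctx.inL v r] => node a x (node b v r)          -- zig
  | node a x b, [Ctx.inR l v] => node (node l v a) x b          -- zig
  | node a x b, Ctx.inL p pr :: Ctx.inL g gr :: cs =>           -- zig-zig
      splayLoop (node a x (node b p (node pr g gr))) cs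
  | node a x b, Ctx.inL p pr :: Ctx.inR gl g :: cs =>           -- zig-zag
      splayLoop (node (node gl g a) x (node b p pr)) cs
  | node a x b, Ctx.inR pl p :: Ctx.inR gl g :: cs =>           -- zig-zig
      splayLoop (node (node (node gl g pl) p a) x b) cs
  | node a x b, Ctx.inR pl p :: Ctx.inL g gr :: cs =>           -- zig-zag
      splayLoop (node (node pl p a) x (node b g gr)) cs
  | leaf, cs => rebuild leaf cs   -- unreachable when the splayed key is present

/-- Splaying the key `x`: if `x` occurs in the tree, bring its node to the
root by bottom-up splay steps; otherwise leave the tree unchanged. -/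
def splay (x : α) (t : BT α) : BT α :=
  match descend t x [] with
  | (_, leaf) => t
  | (cs, found) => splayLoop found cs

/-- `α`-weight-balance in the sense of Nievergelt–Reingold:
at each node, `min(|L|,|R|) + 1 ≥ α * (|x| + 1)`. -/
def WeightBalanced (a : ℝ) : BT α → Prop
  | leaf => True
  | node l _ r =>
      (min l.size r.size + 1 : ℝ) ≥ a * ((l.size + r.size + 1 : ℕ) + 1 : ℝ) ∧
      WeightBalanced a l ∧ WeightBalanced a r

/-- The rank of `x` in `t`: the number of keys of `t` that are `≤ x`. -/
def rank (t : BT α) (x : α) : ℕ := (t.keys.filter (fun y => y ≤ x)).length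

end BT

section Defs

variable {α : Type} [LinearOrder α]

/-- The insertion tree of a sequence: leaf-insert the keys in order. -/
def bstOf (π : List α) : BT α := π.foldl BT.insertKey BT.leaf

/-- `q` is a sub-root: a node of `t` not yet touched whose parent is touched,
where `touched` is the list of touched keys. -/
def IsSubRoot (t : BT α) (touched : List α) (q : α) : Prop :=
  q ∈ t.keys ∧ q ∉ touched ∧ ∃ p, t.parentKey q = some p ∧ p ∈ touched

/-- π avoids the pattern (2,3,1). -/
def Avoids231 (π : List α) : Prop :=
  ¬ ∃ i j k : Fin π.length, i < j ∧ j < k ∧ π.get k < π.get i ∧ π.get i < π.get j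

/-- π avoids the pattern (3,1,2). -/
def Avoids312 (π : List α) : Prop :=
  ¬ ∃ i j k : Fin π.length, i < j ∧ j < k ∧ π.get j < π.get k ∧ π.get k < π.get i

/-- π avoids the pattern (2,1,3). -/
def Avoids213 (π : List α) : Prop :=
  ¬ ∃ i j k : Fin π.length, i < j ∧ j < k ∧ π.get j < π.get i ∧ π.get i < π.get k

/-- π contains a strictly decreasing subsequence of length `k`. -/
def HasDecreasingSubseq (π : List α) (k : ℕ) : Prop :=
  ∃ s : List α, s.Sublist π ∧ s.length = k ∧ s.Chain' (· > ·)

/-- Splay the keys of a list in order, starting from `t`. -/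
def splaySeq (π : List α) (t : BT α) : BT α := π.foldl (fun s x => BT.splay x s) t

/-- The cost of splaying a sequence of keys starting from `t`:
each splay costs the current depth of the requested key plus one. -/
def splayCost : BT α → List α → ℕ
  | _, [] => 0
  | t, x :: xs => (t.depthOf x + 1) + splayCost (BT.splay x t) xs

/-- The cost of insertion splaying a sequence of keys starting from `t`:
each key is leaf-inserted, then the new node is splayed, at a cost of
its depth after insertion plus one. -/
def insertSplayCost : BT α → List α → ℕ
  | _, [] => 0
  | t, x :: xs =>
    ((t.insertKey x).depthOf x + 1) + insertSplayCost (BT.splay x (t.insertKey x)) xs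

/-- `DF rk xs` = Σ_{i≥2} log₂(|rk(x_i) − rk(x_{i−1})| + 1). -/
noncomputable def DF (rk : α → ℕ) (xs : List α) : ℝ :=
  ((xs.zip xs.tail).map
    (fun p => Real.logb 2 (|(rk p.2 : ℝ) - (rk p.1 : ℝ)| + 1))).sum

/-- The rank of `x` within the sequence `σ` itself. -/
def rankIn (σ : List α) (x : α) : ℕ := (σ.filter (fun y => y ≤ x)).length

/-- The dynamic-finger sum of a sequence, with ranks computed in the
sequence itself. -/
noncomputable def DFseq (σ : List α) : ℝ := DF (rankIn σ) σ

end Defs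

section Aux

variable {α : Type} [LinearOrder α]

open BT

@[simp] lemma BT.mem_keys_node {l r : BT α} {v x : α} :
    x ∈ (BT.node l v r).keys ↔ x ∈ l.keys ∨ x = v ∨ x ∈ r.keys := by
  simp [BT.keys]

lemma BT.mem_preorder {t : BT α} {x : α} : x ∈ t.preorder ↔ x ∈ t.keys := by
  induction t with
  | leaf => simp [BT.preorder, BT.keys]
  | node l v r ihl ihr => simp [BT.preorder, ihl, ihr]; tauto

lemma BT.parentKey_mem {t : BT α} {q p : α} (h : t.parentKey q = some p) : p ∈ t.keys := by
  induction t with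
  | leaf => simp [BT.parentKey] at h
  | node l v r ihl ihr =>
    simp only [BT.parentKey] at h
    split at h
    · split at h
      · simp at h; simp [h]
      · simp [ihl h]
    · split at h
      · split at h
        · simp at h; simp [h]
        · simp [ihr h]
      · simp at h

lemma BT.rootKey_eq_get_zero (t : BT α) (h : 0 < t.preorder.length) :
    t.rootKey = some (t.preorder.get ⟨0, h⟩) := by
  cases t with
  | leaf => simp [BT.preorder] at h
  | node l v r => rfl

lemma get_zero_mem_take {xs : List α} (h : 0 < xs.length) {j : ℕ} (hj : 1 ≤ j) :
    xs.get ⟨0, h⟩ ∈ xs.take j := by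
  cases xs with
  | nil => simp at h
  | cons a tl =>
    cases j with
    | zero => omega
    | succ j => simp

lemma dropWhile_head_false {p : α → Bool} :
    ∀ (l : List α) {a : α} {tl : List α}, l.dropWhile p = a :: tl → p a = false := by
  intro l
  induction l with
  | nil => intro a tl h; simp at h
  | cons b l ih =>
    intro a tl h
    by_cases hb : p b
    · rw [List.dropWhile_cons_of_pos hb] at h; exact ih h
    · rw [List.dropWhile_cons_of_neg hb] at h
      cases h
      simpa using hb

/-- sublist-style 231-avoidance -/
def Av (π : List α) : Prop := ∀ a b c : α, [a, b, c].Sublist π → ¬(c < a ∧ a < b)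

lemma av_of_avoids231 {π : List α} (h : Avoids231 π) : Av π := by
  rintro a b c hsub ⟨h1, h2⟩
  obtain ⟨is, his, hp⟩ := List.sublist_eq_map_getElem hsub
  have hlen : is.length = 3 := by
    have := congrArg List.length his
    simpa using this.symm
  obtain ⟨i, j, k, rfl⟩ : ∃ i j k, is = [i, j, k] := by
    match is, hlen with
    | [i, j, k], _ => exact ⟨i, j, k, rfl⟩
  simp only [List.map, List.cons.injEq, and_true] at his
  obtain ⟨ha, hb, hc⟩ := his
  obtain ⟨hp1, hp2⟩ := List.pairwise_cons.mp hp
  obtain ⟨hp3, _⟩ := List.pairwise_cons.mp hp2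
  exact h ⟨i, j, k, hp1 j (by simp), hp3 k (by simp), by simp only [List.get_eq_getElem, Fin.getElem_fin] at ha hb hc ⊢; rw [← ha, ← hc]; exact h1,
    by simp only [List.get_eq_getElem, Fin.getElem_fin] at ha hb hc ⊢; rw [← ha, ← hb]; exact h2⟩

lemma split231 {x : α} {rest : List α} (hnd : (x :: rest).Nodup) (hav : Av (x :: rest)) :
    ∃ S L, rest = S ++ L ∧ (∀ a ∈ S, a < x) ∧ (∀ a ∈ L, x < a) := by
  classical
  set p : α → Bool := fun a => decide (a < x) with hp
  refine ⟨rest.takeWhile p, rest.dropWhile p, (List.takeWhile_append_dropWhile (p := p) (l := rest)).symm,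
    ?_, ?_⟩
  · intro a ha
    have := List.mem_takeWhile_imp ha
    simpa [hp] using this
  · have hxrest : x ∉ rest := (List.nodup_cons.mp hnd).1
    intro a ha
    have hamem : a ∈ rest := (List.dropWhile_sublist p).mem ha
    have hax : a ≠ x := fun h => hxrest (h ▸ hamem)
    cases hDW : rest.dropWhile p with
    | nil => rw [hDW] at ha; simp at ha
    | cons hd tl =>
      have hhd_not : p hd = false := dropWhile_head_false rest hDW
      have hhd_mem : hd ∈ rest := (List.dropWhile_sublist p).mem (by rw [hDW]; simp)
      have hhdx : x < hd := by
        have h1 : ¬ hd < x := by simpa [hp] using hhd_not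
        have h2 : hd ≠ x := fun h => hxrest (h ▸ hhd_mem)
        exact lt_of_le_of_ne (not_lt.mp h1) (Ne.symm h2)
      rw [hDW] at ha
      rcases List.mem_cons.mp ha with rfl | ha'
      · exact hhdx
      · -- a ∈ tl; if a < x we get a 231 pattern [x, hd, a]
        by_contra hcon
        have halt : a < x := lt_of_le_of_ne (not_lt.mp hcon) hax
        have s1 : [hd, a].Sublist (hd :: tl) :=
          List.Sublist.cons₂ hd (List.singleton_sublist.mpr ha')
        rw [← hDW] at s1
        have s2 : [hd, a].Sublist rest := s1.trans (List.dropWhile_sublist p)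
        exact hav x hd a (List.Sublist.cons₂ x s2) ⟨halt, hhdx⟩

lemma foldl_insert_lt {v : α} (r : BT α) :
    ∀ (s : List α) (l : BT α), (∀ a ∈ s, a < v) →
      s.foldl BT.insertKey (BT.node l v r) = BT.node (s.foldl BT.insertKey l) v r := by
  intro s
  induction s with
  | nil => intro l _; rfl
  | cons a s ih =>
    intro l h
    have ha : a < v := h a (by simp)
    simp only [List.foldl_cons]
    rw [show (BT.node l v r).insertKey a = BT.node (l.insertKey a) v r by
      simp [BT.insertKey, ha]]
    exact ih _ (fun b hb => h b (by simp [hb]))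

lemma foldl_insert_gt {v : α} (l : BT α) :
    ∀ (s : List α) (r : BT α), (∀ a ∈ s, v < a) →
      s.foldl BT.insertKey (BT.node l v r) = BT.node l v (s.foldl BT.insertKey r) := by
  intro s
  induction s with
  | nil => intro r _; rfl
  | cons a s ih =>
    intro r h
    have ha : v < a := h a (by simp)
    simp only [List.foldl_cons]
    rw [show (BT.node l v r).insertKey a = BT.node l v (r.insertKey a) by
      simp [BT.insertKey, ha, ha.not_gt]]
    exact ih _ (fun b hb => h b (by simp [hb]))

lemma bst_structure : ∀ (n : ℕ) (π : List α), π.length ≤ n → π.Nodup → Av π →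
    (bstOf π).preorder = π ∧ (bstOf π).IsBST := by
  intro n
  induction n with
  | zero =>
    intro π hlen _ _
    have : π = [] := List.length_eq_zero_iff.mp (Nat.le_zero.mp hlen)
    subst this
    exact ⟨rfl, trivial⟩
  | succ n ih =>
    intro π hlen hnd hav
    cases π with
    | nil => exact ⟨rfl, trivial⟩
    | cons x rest =>
      obtain ⟨S, L, hSL, hS, hL⟩ := split231 hnd hav
      have hndr : rest.Nodup := (List.nodup_cons.mp hnd).2
      have hrlen : rest.length ≤ n := by simpa using hlen
      have hSsub : S.Sublist rest := hSL ▸ List.sublist_append_left S L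
      have hLsub : L.Sublist rest := hSL ▸ List.sublist_append_right S L
      have hrest_sub : rest.Sublist (x :: rest) := List.sublist_cons_self x rest
      have ihS := ih S (le_trans (hSsub.length_le) hrlen) (hSsub.nodup hndr)
        (fun a b c hs => hav a b c ((hs.trans hSsub).trans hrest_sub))
      have ihL := ih L (le_trans (hLsub.length_le) hrlen) (hLsub.nodup hndr)
        (fun a b c hs => hav a b c ((hs.trans hLsub).trans hrest_sub))
      have heq : bstOf (x :: rest) = BT.node (bstOf S) x (bstOf L) := by
        show (x :: rest).foldl BT.insertKey BT.leaf = _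
        rw [List.foldl_cons, show BT.leaf.insertKey x = BT.node BT.leaf x BT.leaf from rfl,
          hSL, List.foldl_append, foldl_insert_lt _ S _ hS, foldl_insert_gt _ L _ hL]
        rfl
      constructor
      · rw [heq]
        simp only [BT.preorder, ihS.1, ihL.1, hSL]
      · rw [heq]
        refine ⟨?_, ?_, ihS.2, ihL.2⟩
        · intro y hy
          exact hS y (by rw [← ihS.1]; exact BT.mem_preorder.mpr hy)
        · intro y hy
          exact hL y (by rw [← ihL.1]; exact BT.mem_preorder.mpr hy)

end Aux

section LemB

variable {α : Type} [LinearOrder α]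

lemma isSubRoot_iff {t : BT α} {touched : List α} {q : α} :
    IsSubRoot t touched q ↔
      q ∈ t.keys ∧ q ∉ touched ∧ ∃ p, t.parentKey q = some p ∧ p ∈ touched := Iff.rfl

lemma subroot_lemma : ∀ (t : BT α), t.IsBST → ∀ (i : ℕ), 1 ≤ i →
    ∀ (hlen : i < t.preorder.length),
    IsSubRoot t (t.preorder.take i) (t.preorder[i]'hlen) ∧
    ∀ q, IsSubRoot t (t.preorder.take i) q → t.preorder[i]'hlen ≤ q := by
  intro t
  induction t with
  | leaf => intro _ i _ hlen; simp [BT.preorder] at hlen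
  | node l v r ihl ihr =>
    intro hbst i hi hlen
    simp only [BT.IsBST] at hbst
    obtain ⟨hl, hr, hbl, hbr⟩ := hbst
    obtain ⟨j, rfl⟩ : ∃ j, i = j + 1 := ⟨i - 1, by omega⟩
    have hpre : (BT.node l v r).preorder = v :: (l.preorder ++ r.preorder) := rfl
    have hlenj : j < l.preorder.length + r.preorder.length := by
      have h := hlen; rw [hpre] at h; simpa using h
    simp only [isSubRoot_iff, hpre, List.take_succ_cons, List.getElem_cons_succ]
    have hlkeys : ∀ y ∈ l.preorder, y ∈ l.keys := fun y hy => BT.mem_preorder.mp hy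
    have hrkeys : ∀ y ∈ r.preorder, y ∈ r.keys := fun y hy => BT.mem_preorder.mp hy
    by_cases hj : j < l.preorder.length
    · -- Case A: the target is inside the left subtree
      have htk : (l.preorder ++ r.preorder).take j = l.preorder.take j := by
        rw [List.take_append, Nat.sub_eq_zero_of_le (le_of_lt hj),
          List.take_zero, List.append_nil]
      have hgt : (l.preorder ++ r.preorder)[j]'(by simpa using hlenj) = l.preorder[j]'hj :=
        List.getElem_append_left hj
      rw [htk, hgt]
      rcases Nat.eq_zero_or_pos j with rfl | hj1
      · -- A1 : j = 0, target is the root of l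
        cases l with
        | leaf => simp [BT.preorder] at hj
        | node a w b =>
          have hw0 : (BT.node a w b).preorder[0] = w := rfl
          rw [hw0]
          have hwk : w ∈ (BT.node a w b).keys := by simp
          have hwv : w < v := hl w hwk
          constructor
          · refine ⟨by simp, by simp [hwv.ne], v, ?_, by simp⟩
            simp only [BT.parentKey]
            rw [if_pos hwv, if_pos (show (BT.node a w b).rootKey = some w from rfl)]
          · rintro q ⟨hqk, hqt, p, hp, hpt⟩
            simp only [List.take_zero, List.mem_singleton] at hpt hqt
            rw [hpt] at hp
            rcases BT.mem_keys_node.mp hqk with hq | rfl | hq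
            · have hqv : q < v := hl q hq
              simp only [BT.parentKey] at hp
              rw [if_pos hqv] at hp
              by_cases hroot : (BT.node a w b).rootKey = some q
              · have : w = q := by simpa [BT.rootKey] using hroot
                exact this.le
              · rw [if_neg hroot] at hp
                have : v ∈ (BT.node a w b).keys := BT.parentKey_mem hp
                exact absurd (hl v this) (lt_irrefl v)
            · exact absurd rfl hqt
            · exact (hwv.trans (hr q hq)).le
      · -- A2 : j ≥ 1, use induction hypothesis on l
        obtain ⟨hsr, hmin⟩ := ihl hbl j hj1 hj
        rw [isSubRoot_iff] at hsr
        obtain ⟨hg_mem, hg_nt, pg, hpg, hpg_t⟩ := hsr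
        have hglt : l.preorder[j]'hj < v := hl _ hg_mem
        have hplen : 0 < l.preorder.length := by omega
        constructor
        · refine ⟨by simp [hg_mem], by simp [hglt.ne, hg_nt], pg, ?_, by simp [hpg_t]⟩
          simp only [BT.parentKey]
          rw [if_pos hglt, if_neg ?_, hpg]
          intro hroot
          have hq0 : l.preorder[j]'hj = l.preorder.get ⟨0, hplen⟩ := by
            have h2 := (BT.rootKey_eq_get_zero l hplen).symm.trans hroot
            exact (Option.some.inj h2).symm
          exact hg_nt (by rw [hq0]; exact get_zero_mem_take hplen hj1)
        · rintro q ⟨hqk, hqt, p, hp, hpt⟩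
          simp only [List.mem_cons] at hqt hpt
          push_neg at hqt
          rcases BT.mem_keys_node.mp hqk with hq | rfl | hq
          · have hqv : q < v := hl q hq
            simp only [BT.parentKey] at hp
            rw [if_pos hqv] at hp
            by_cases hroot : l.rootKey = some q
            · exfalso
              have hq0 : q = l.preorder.get ⟨0, hplen⟩ :=
                (Option.some.inj ((BT.rootKey_eq_get_zero l hplen).symm.trans hroot)).symm
              exact hqt.2 (by rw [hq0]; exact get_zero_mem_take hplen hj1)
            · rw [if_neg hroot] at hp
              have hpk : p ∈ l.keys := BT.parentKey_mem hp
              have hptk : p ∈ l.preorder.take j := by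
                rcases hpt with rfl | h
                · exact absurd (hl p hpk) (lt_irrefl p)
                · exact h
              exact hmin q (isSubRoot_iff.mpr ⟨hq, hqt.2, p, hp, hptk⟩)
          · exact absurd rfl hqt.1
          · exact (hglt.trans (hr q hq)).le
    · -- Case B: the target is inside the right subtree
      push_neg at hj
      have hm : j - l.preorder.length < r.preorder.length := by omega
      have htk : (l.preorder ++ r.preorder).take j
          = l.preorder ++ r.preorder.take (j - l.preorder.length) := by
        rw [List.take_append, List.take_of_length_le hj]
      have hgt : (l.preorder ++ r.preorder)[j]'(by simpa using hlenj)
          = r.preorder[j - l.preorder.length]'hm := List.getElem_append_right hj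
      rw [htk, hgt]
      obtain ⟨m, hmj⟩ : ∃ m, j - l.preorder.length = m := ⟨_, rfl⟩
      rw [hmj] at hm
      simp only [hmj]
      have hdisj : ∀ y ∈ r.keys, y ∉ l.preorder := by
        intro y hy hyl
        exact absurd ((hr y hy).trans (hl y (hlkeys y hyl))) (lt_irrefl v)
      rcases Nat.eq_zero_or_pos m with hm0 | hm1
      · -- B1 : m = 0, target is the root of r
        subst hm0
        cases r with
        | leaf => simp [BT.preorder] at hm
        | node a w b =>
          have hw0 : (BT.node a w b).preorder[0] = w := rfl
          rw [hw0]
          have hwk : w ∈ (BT.node a w b).keys := by simp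
          have hwv : v < w := hr w hwk
          constructor
          · refine ⟨by simp, ?_, v, ?_, by simp⟩
            · simp only [List.take_zero, List.append_nil, List.mem_cons, not_or]
              exact ⟨hwv.ne', hdisj w hwk⟩
            · simp only [BT.parentKey]
              rw [if_neg hwv.asymm, if_pos hwv, if_pos (show (BT.node a w b).rootKey = some w from rfl)]
          · rintro q ⟨hqk, hqt, p, hp, hpt⟩
            simp only [List.take_zero, List.append_nil, List.mem_cons] at hqt hpt
            push_neg at hqt
            rcases BT.mem_keys_node.mp hqk with hq | rfl | hq
            · exact absurd (BT.mem_preorder.mpr hq) hqt.2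
            · exact absurd rfl hqt.1
            · have hqv : v < q := hr q hq
              simp only [BT.parentKey] at hp
              rw [if_neg hqv.asymm, if_pos hqv] at hp
              by_cases hroot : (BT.node a w b).rootKey = some q
              · exact (show w = q by simpa [BT.rootKey] using hroot).le
              · rw [if_neg hroot] at hp
                have hpk : p ∈ (BT.node a w b).keys := BT.parentKey_mem hp
                exfalso
                rcases hpt with rfl | h
                · exact absurd (hr p hpk) (lt_irrefl p)
                · exact hdisj p hpk h
      · -- B2 : m ≥ 1, use induction hypothesis on r
        obtain ⟨hsr, hmin⟩ := ihr hbr m hm1 hm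
        rw [isSubRoot_iff] at hsr
        obtain ⟨hg_mem, hg_nt, pg, hpg, hpg_t⟩ := hsr
        have hggt : v < r.preorder[m]'hm := hr _ hg_mem
        have hplen : 0 < r.preorder.length := by omega
        constructor
        · refine ⟨by simp [hg_mem], ?_, pg, ?_, ?_⟩
          · simp only [List.mem_cons, List.mem_append, not_or]
            exact ⟨hggt.ne', hdisj _ hg_mem, hg_nt⟩
          · simp only [BT.parentKey]
            rw [if_neg hggt.asymm, if_pos hggt, if_neg ?_, hpg]
            intro hroot
            have hq0 : r.preorder[m]'hm = r.preorder.get ⟨0, hplen⟩ :=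
              (Option.some.inj ((BT.rootKey_eq_get_zero r hplen).symm.trans hroot)).symm
            exact hg_nt (by rw [hq0]; exact get_zero_mem_take hplen hm1)
          · simp only [List.mem_cons, List.mem_append]
            exact Or.inr (Or.inr hpg_t)
        · rintro q ⟨hqk, hqt, p, hp, hpt⟩
          simp only [List.mem_cons, List.mem_append] at hqt hpt
          push_neg at hqt
          rcases BT.mem_keys_node.mp hqk with hq | rfl | hq
          · exact absurd (BT.mem_preorder.mpr hq) hqt.2.1
          · exact absurd rfl hqt.1
          · have hqv : v < q := hr q hq
            simp only [BT.parentKey] at hp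
            rw [if_neg hqv.asymm, if_pos hqv] at hp
            by_cases hroot : r.rootKey = some q
            · exfalso
              have hq0 : q = r.preorder.get ⟨0, hplen⟩ :=
                (Option.some.inj ((BT.rootKey_eq_get_zero r hplen).symm.trans hroot)).symm
              exact hqt.2.2 (by rw [hq0]; exact get_zero_mem_take hplen hm1)
            · rw [if_neg hroot] at hp
              have hpk : p ∈ r.keys := BT.parentKey_mem hp
              have hptk : p ∈ r.preorder.take m := by
                rcases hpt with rfl | h | h
                · exact absurd (hr p hpk) (lt_irrefl p)
                · exact absurd h (hdisj p hpk)
                · exact h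
              exact hmin q (isSubRoot_iff.mpr ⟨hq, hqt.2.2, p, hp, hptk⟩)

end LemB

/-- For a (2,3,1)-avoiding sequence of distinct keys, each key after the first
is, at the time of its insertion, the smallest sub-root of the insertion tree:
the smallest key outside the already-inserted prefix whose parent's key lies
in the prefix. -/
theorem smallest_subroot_of_avoids231 {α : Type} [LinearOrder α]
    (π : List α) (hnd : π.Nodup) (hav : Avoids231 π)
    (i : Fin π.length) (hi : 1 ≤ i.val) :
    IsSubRoot (bstOf π) (π.take i.val) (π.get i) ∧
      ∀ q, IsSubRoot (bstOf π) (π.take i.val) q → π.get i ≤ q := by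
  have hav' : Av π := av_of_avoids231 hav
  obtain ⟨hpre, hbst⟩ := bst_structure π.length π le_rfl hnd hav'
  have hlen : i.val < (bstOf π).preorder.length := by rw [hpre]; exact i.isLt
  obtain ⟨h1, h2⟩ := subroot_lemma (bstOf π) hbst i.val hi hlen
  have htake : (bstOf π).preorder.take i.val = π.take i.val := by rw [hpre]
  have hget : (bstOf π).preorder[i.val]'hlen = π.get i := by
    simp only [hpre, List.get_eq_getElem]
  rw [htake, hget] at h1 h2
  exact ⟨h1, h2⟩
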